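/- arXiv:2602.00512 — 2 statements merged into one kernel-verified Lean document; each statement's English description precedes it below -/
import Mathlib

section
/- Let p > 0, q > 0 and define f(x) = (1/2)((q x − p x³)² + q − 3p x²) for x ∈ ℝ. Then f attains its minimum over ℝ, the minimum value equals −q/2 − √(q²+9p)/3 + q³/(27p) − q²·√(q²+9p)/(27p), and the minimum is attained at the points x = ±√((2q + √(q²+9p))/(3p)). -/
/-- For `p, q > 0` and `f(x) = (1/2)((qx − px³)² + q − 3px²)`,
`f` attains its minimum over `ℝ`; the minimum value equals
`−q/2 − √(q²+9p)/3 + q³/(27p) − q²√(q²+9p)/(27p)`, attained at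
`x = ±√((2q + √(q²+9p))/(3p))`. -/
theorem stmt8 (p q : ℝ) (hp : 0 < p) (hq : 0 < q) :
    let f : ℝ → ℝ := fun x => (1/2) * ((q*x - p*x^3)^2 + q - 3*p*x^2)
    let m : ℝ := -q/2 - Real.sqrt (q^2 + 9*p)/3 + q^3/(27*p)
        - q^2 * Real.sqrt (q^2 + 9*p)/(27*p)
    let ζ : ℝ := Real.sqrt ((2*q + Real.sqrt (q^2 + 9*p))/(3*p))
    IsLeast (Set.range f) m ∧ f ζ = m ∧ f (-ζ) = m := by
  intro f m ζ
  set s : ℝ := Real.sqrt (q^2 + 9*p) with hs_def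
  have hS : (0:ℝ) ≤ q^2 + 9*p := by positivity
  have hs : s^2 = q^2 + 9*p := Real.sq_sqrt hS
  have hs0 : 0 ≤ s := Real.sqrt_nonneg _
  have hsq : q ≤ s := by nlinarith [hq.le]
  -- key identity
  have key : ∀ x : ℝ, 54*p*(f x) + 27*p*q + 18*p*s - 2*q^3 + 2*q^2*s
      = (3*p*x^2 - 2*q - s)^2 * (3*p*x^2 + 2*s - 2*q) := by
    intro x
    simp only [f]
    linear_combination (3*(3*p*x^2 - 2*q) - 2*s) * hs
  have hm : 54*p*m = -(27*p*q) - 18*p*s + 2*q^3 - 2*q^2*s := by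
    simp only [m, ← hs_def]
    field_simp
    ring
  -- lower bound
  have hlb : ∀ x : ℝ, m ≤ f x := by
    intro x
    have h1 : (0:ℝ) ≤ (3*p*x^2 - 2*q - s)^2 * (3*p*x^2 + 2*s - 2*q) := by
      have : (0:ℝ) ≤ 3*p*x^2 + 2*s - 2*q := by nlinarith [sq_nonneg x]
      positivity
    nlinarith [key x]
  -- value at ζ
  have hζsq : ζ^2 = (2*q + s)/(3*p) := Real.sq_sqrt (by positivity)
  have hζval : f ζ = m := by
    have h := key ζ
    have h2 : 3*p*ζ^2 - 2*q - s = 0 := by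
      rw [hζsq]; field_simp; ring
    have h4 : 54*p*(f ζ) = 54*p*m := by
      linear_combination h - hm + (3*p*ζ^2 + 2*s - 2*q)*(3*p*ζ^2 - 2*q - s)*h2
    exact mul_left_cancel₀ (by positivity : (54:ℝ)*p ≠ 0) h4
  have hζval' : f (-ζ) = m := by
    have : f (-ζ) = f ζ := by simp only [f]; ring
    rw [this, hζval]
  exact ⟨⟨⟨ζ, hζval⟩, by rintro y ⟨x, rfl⟩; exact hlb x⟩, hζval, hζval'⟩
end

section
/- Let p > 0, q > 0 and define f(x) = (1/2)((q x − p x³)² + q − 3p x²) for x ∈ ℝ. Let L ≤ U be real numbers and define the finite candidate set C = {L, U} ∪ ({0} ∩ [L,U]) ∪ D, where D = {ζ, −ζ} ∩ [L,U] with ζ = √((2q − √(q²+9p))/(3p)) if q² > 3p, and D = ∅ otherwise. Then sup_{x ∈ [L,U]} f(x) = max_{x ∈ C} f(x). -/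
open scoped Classical

set_option maxHeartbeats 1000000 in
/-- For `p, q > 0`, `f(x) = (1/2)((qx − px³)² + q − 3px²)`, and
`L ≤ U`, the supremum of `f` over `[L,U]` equals its maximum over the finite
candidate set `C = {L,U} ∪ ({0} ∩ [L,U]) ∪ D`, where `D = {ζ, −ζ} ∩ [L,U]`
with `ζ = √((2q − √(q²+9p))/(3p))` if `q² > 3p`, and `D = ∅` otherwise. -/
theorem stmt11 (p q : ℝ) (hp : 0 < p) (hq : 0 < q) (L U : ℝ) (hLU : L ≤ U) :
    let f : ℝ → ℝ := fun x => (1/2) * ((q*x - p*x^3)^2 + q - 3*p*x^2)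
    let ζ : ℝ := Real.sqrt ((2*q - Real.sqrt (q^2 + 9*p))/(3*p))
    let D : Set ℝ := if q^2 > 3*p then ({ζ, -ζ} : Set ℝ) ∩ Set.Icc L U else (∅ : Set ℝ)
    let C : Set ℝ := ({L, U} : Set ℝ) ∪ (({0} : Set ℝ) ∩ Set.Icc L U) ∪ D
    sSup (f '' Set.Icc L U) = sSup (f '' C) := by
  intro f ζ D C
  set s : ℝ := Real.sqrt (q^2 + 9*p) with hs_def
  have hs2 : s^2 = q^2 + 9*p := Real.sq_sqrt (by positivity)
  have hs0 : 0 < s := Real.sqrt_pos.2 (by positivity)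
  set t₁ : ℝ := (2*q - s)/(3*p) with ht1_def
  set t₂ : ℝ := (2*q + s)/(3*p) with ht2_def
  have h3p : (0:ℝ) < 3*p := by linarith
  have ht2pos : 0 < t₂ := div_pos (by linarith) h3p
  have ht12 : t₁ < t₂ := by
    rw [ht1_def, ht2_def, div_lt_div_iff₀ h3p h3p]
    nlinarith
  have hζ : ζ = Real.sqrt t₁ := rfl
  -- derivative
  have hder : ∀ x : ℝ, HasDerivAt f (3*p^2 * x * (x^2 - t₁) * (x^2 - t₂)) x := by
    intro x
    have h1 : HasDerivAt (fun x : ℝ => q*x - p*x^3) (q*1 - p*(3*x^2)) x := by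
      have ha := (hasDerivAt_id x).const_mul q
      have hb := (hasDerivAt_pow 3 x).const_mul p
      exact (ha.sub hb).congr_deriv (by simp)
    have h2 := h1.pow 2
    have h3 : HasDerivAt (fun x : ℝ => 3*p*x^2) (3*p*(2*x)) x := by
      simpa using (hasDerivAt_pow 2 x).const_mul (3*p)
    have h4 := ((h2.add_const q).sub h3).const_mul (1/2 : ℝ)
    refine h4.congr_deriv (Eq.symm ?_)
    rw [ht1_def, ht2_def]
    field_simp
    linear_combination (-2*x) * hs2
  have hfc : Continuous f := continuous_iff_continuousAt.2 fun x => (hder x).differentiableAt.continuousAt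
  obtain ⟨x₀, hx₀mem, hx₀max⟩ :=
    isCompact_Icc.exists_isMaxOn (Set.nonempty_Icc.2 hLU) hfc.continuousOn
  have hDpos : ∀ h : q^2 > 3*p, D = ({ζ, -ζ} : Set ℝ) ∩ Set.Icc L U := fun h => if_pos h
  have hDneg : ∀ h : ¬ (q^2 > 3*p), D = (∅ : Set ℝ) := fun h => if_neg h
  have hCsub : C ⊆ Set.Icc L U := by
    intro x hx
    rcases hx with (h | h) | h
    · simp only [Set.mem_insert_iff, Set.mem_singleton_iff] at h
      rcases h with rfl | rfl
      · exact ⟨le_refl _, hLU⟩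
      · exact ⟨hLU, le_refl _⟩
    · exact h.2
    · by_cases hq3 : q^2 > 3*p
      · rw [hDpos hq3] at h; exact h.2
      · rw [hDneg hq3] at h; exact absurd h (Set.notMem_empty x)
  have hx₀C : x₀ ∈ C := by
    by_cases hL : x₀ = L
    · exact Or.inl (Or.inl (Or.inl hL))
    by_cases hU : x₀ = U
    · exact Or.inl (Or.inl (Or.inr hU))
    have hL' : L < x₀ := lt_of_le_of_ne hx₀mem.1 (Ne.symm hL)
    have hU' : x₀ < U := lt_of_le_of_ne hx₀mem.2 hU
    have hloc : IsLocalMax f x₀ := hx₀max.isLocalMax (Icc_mem_nhds hL' hU')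
    have hd0 : 3*p^2 * x₀ * (x₀^2 - t₁) * (x₀^2 - t₂) = 0 :=
      hloc.hasDerivAt_eq_zero (hder x₀)
    have hcases : x₀ = 0 ∨ x₀^2 = t₁ ∨ x₀^2 = t₂ := by
      rcases mul_eq_zero.1 hd0 with h | h
      · rcases mul_eq_zero.1 h with h | h
        · rcases mul_eq_zero.1 h with h | h
          · exact absurd h (by positivity)
          · exact Or.inl h
        · exact Or.inr (Or.inl (by linarith))
      · exact Or.inr (Or.inr (by linarith))
    rcases hcases with h0 | ht | ht
    · exact Or.inl (Or.inr ⟨h0, hx₀mem⟩)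
    · -- stationary point case: x₀² = t₁
      by_cases h0 : x₀ = 0
      · exact Or.inl (Or.inr ⟨h0, hx₀mem⟩)
      · have ht1pos : 0 < t₁ := by
          rw [← ht]; positivity
        have hq3 : q^2 > 3*p := by
          have h' : 0 < (2*q - s)/(3*p) := ht1_def ▸ ht1pos
          have h2qs : 0 < 2*q - s := by
            rcases div_pos_iff.mp h' with ⟨h1, _⟩ | ⟨_, h2⟩
            · exact h1
            · linarith
          nlinarith [hs2, mul_pos h2qs (show (0:ℝ) < 2*q + s by linarith)]
        have hζ2 : ζ^2 = t₁ := by rw [hζ]; exact Real.sq_sqrt ht1pos.le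
        have hx : x₀ = ζ ∨ x₀ = -ζ := by
          have : x₀^2 = ζ^2 := by rw [hζ2, ht]
          exact sq_eq_sq_iff_eq_or_eq_neg.mp this
        refine Or.inr ?_
        rw [hDpos hq3]
        refine ⟨?_, hx₀mem⟩
        rcases hx with h | h
        · exact Or.inl h
        · exact Or.inr h
    · -- x₀² = t₂ : contradiction
      exfalso
      have hx₀ne : x₀ ≠ 0 := by
        intro h; rw [h] at ht; simp at ht; linarith
      set m : ℝ := Real.sqrt (max t₁ 0) with hm_def
      have hm0 : 0 ≤ m := Real.sqrt_nonneg _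
      have hm2 : m^2 = max t₁ 0 := Real.sq_sqrt (le_max_right _ _)
      have hmt1 : t₁ ≤ m^2 := by rw [hm2]; exact le_max_left _ _
      have hmlt : m < |x₀| := by
        have h1 : max t₁ 0 < t₂ := max_lt ht12 ht2pos
        have h2 : Real.sqrt (max t₁ 0) < Real.sqrt t₂ :=
          Real.sqrt_lt_sqrt (le_max_right _ _) h1
        have h3 : Real.sqrt t₂ = |x₀| := by
          rw [← ht, Real.sqrt_sq_eq_abs]
        rw [← h3]; exact h2
      rcases lt_or_gt_of_ne hx₀ne with hneg | hpos
      · -- x₀ < 0 : f strictly increasing on [x₀, c]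
        have habs : |x₀| = -x₀ := abs_of_neg hneg
        rw [habs] at hmlt
        set c : ℝ := min U (-m) with hc_def
        have hx₀c : x₀ < c := lt_min hU' (by linarith)
        have hmono : StrictMonoOn f (Set.Icc x₀ c) := by
          apply strictMonoOn_of_deriv_pos (convex_Icc x₀ c) hfc.continuousOn
          intro x hx
          rw [interior_Icc] at hx
          rw [(hder x).deriv]
          have hx1 : x < 0 := lt_of_lt_of_le hx.2 ((min_le_right U (-m)).trans (by linarith))
          have hxm : x < -m := lt_of_lt_of_le hx.2 (min_le_right U (-m))
          have hx2 : t₁ < x^2 := lt_of_le_of_lt hmt1 (by nlinarith)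
          have hx3 : x^2 < t₂ := by rw [← ht]; nlinarith [hx.1]
          have hA : 3*p^2 * x < 0 := mul_neg_of_pos_of_neg (by positivity) hx1
          have hB : 3*p^2 * x * (x^2 - t₁) < 0 := mul_neg_of_neg_of_pos hA (by linarith)
          exact mul_pos_of_neg_of_neg hB (by linarith)
        have hy : (x₀ + c)/2 ∈ Set.Icc x₀ c := ⟨by linarith, by linarith⟩
        have hflt : f x₀ < f ((x₀ + c)/2) :=
          hmono (Set.left_mem_Icc.2 hx₀c.le) hy (by linarith)
        have hyIcc : (x₀ + c)/2 ∈ Set.Icc L U := by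
          constructor
          · have := min_le_left U (-m); linarith [hL']
          · have := min_le_left U (-m); linarith
        have := hx₀max hyIcc
        simp only [Set.mem_setOf_eq] at this
        linarith
      · -- x₀ > 0 : f strictly decreasing on [b, x₀]
        have habs : |x₀| = x₀ := abs_of_pos hpos
        rw [habs] at hmlt
        set b : ℝ := max L m with hb_def
        have hbx₀ : b < x₀ := max_lt hL' hmlt
        have hanti : StrictAntiOn f (Set.Icc b x₀) := by
          apply strictAntiOn_of_deriv_neg (convex_Icc b x₀) hfc.continuousOn
          intro x hx
          rw [interior_Icc] at hx
          rw [(hder x).deriv]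
          have hxm : m < x := lt_of_le_of_lt (le_max_right L m) hx.1
          have hx1 : 0 < x := lt_of_le_of_lt hm0 hxm
          have hx2 : t₁ < x^2 := lt_of_le_of_lt hmt1 (by nlinarith)
          have hx3 : x^2 < t₂ := by rw [← ht]; nlinarith [hx.2]
          have hA : 0 < 3*p^2 * x := by positivity
          have hB : 0 < 3*p^2 * x * (x^2 - t₁) := mul_pos hA (by linarith)
          exact mul_neg_of_pos_of_neg hB (by linarith)
        have hy : (b + x₀)/2 ∈ Set.Icc b x₀ := ⟨by linarith, by linarith⟩
        have hflt : f x₀ < f ((b + x₀)/2) :=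
          hanti hy (Set.right_mem_Icc.2 hbx₀.le) (by linarith)
        have hyIcc : (b + x₀)/2 ∈ Set.Icc L U := by
          constructor
          · have := le_max_left L m; linarith [hL']
          · have := le_max_left L m; linarith
        have := hx₀max hyIcc
        simp only [Set.mem_setOf_eq] at this
        linarith
  have h1 : IsGreatest (f '' Set.Icc L U) (f x₀) :=
    ⟨Set.mem_image_of_mem f hx₀mem, by
      rintro y ⟨x, hx, rfl⟩
      exact hx₀max hx⟩
  have h2 : IsGreatest (f '' C) (f x₀) :=
    ⟨Set.mem_image_of_mem f hx₀C, by
      rintro y ⟨x, hx, rfl⟩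
      exact hx₀max (hCsub hx)⟩
  rw [h1.csSup_eq, h2.csSup_eq]
end
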